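/- There is an absolute constant C > 0 such that for every n ≥ 1 and every p ∈ [0,1], the total variation distance between the Binomial(n+1, p) distribution and the distribution of H + B is at most C/n, where H ~ Binomial(n, p) and, conditionally on H, B ~ Bernoulli(H/n). (Equivalently: the (n, n+1) amplification scheme that appends one draw from the empirical distribution of n i.i.d. Bernoulli(p) samples and randomly shuffles achieves total variation distance O(1/n) from n+1 i.i.d. draws.) -/

import Mathlib

open MeasureTheory ProbabilityTheory
open scoped NNReal ENNReal

/-- Total variation distance between two measures: the supremum over measurable
sets `A` of `|μ A - ν A|`. -/
noncomputable def tvDist {Ω : Type*} [MeasurableSpace Ω] (μ ν : Measure Ω) : ℝ :=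
  ⨆ A : {A : Set Ω // MeasurableSet A}, |(μ A).toReal - (ν A).toReal|

/-- The `Binomial(n, p)` distribution as a distribution on `ℕ`. -/
noncomputable def binomNat (p : ℝ≥0∞) (hp : p ≤ 1) (n : ℕ) : PMF ℕ :=
  (PMF.binomial p.toNNReal (by simpa using ENNReal.toNNReal_mono ENNReal.one_ne_top hp) n).map (fun i => (i : ℕ))

/-- The law of `H + B`, where `H ∼ Binomial(n, p)` and, conditionally on `H`,
`B ∼ Bernoulli(H/n)`. -/
noncomputable def binomPlusEmpirical (p : ℝ≥0∞) (hp : p ≤ 1) (n : ℕ) : PMF ℕ :=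
  (PMF.binomial p.toNNReal (by simpa using ENNReal.toNNReal_mono ENNReal.one_ne_top hp) n).bind fun h =>
    (PMF.bernoulli (((h : ℕ) : ℝ≥0∞) / (n : ℝ≥0∞)).toNNReal
        (by
          have h1 : ((h : ℕ) : ℝ≥0∞) / (n : ℝ≥0∞) ≤ 1 := ENNReal.div_le_of_le_mul (by
            simpa using (Nat.cast_le (α := ℝ≥0∞)).mpr h.is_le)
          simpa using ENNReal.toNNReal_mono ENNReal.one_ne_top h1)).map
      fun b => (h : ℕ) + (if b then 1 else 0)

/-! ### Auxiliary real-valued binomial computations -/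

lemma binR_sum (pr : ℝ) (M : ℕ) :
    ∑ k ∈ Finset.range (M+1), pr^k * (1-pr)^(M-k) * (M.choose k:ℝ) = 1 := by
  have := add_pow pr (1-pr) M
  simp at this
  rw [← this]

lemma binR_sum_mul (pr : ℝ) (M : ℕ) :
    ∑ k ∈ Finset.range (M+2), (k:ℝ) * (pr^k * (1-pr)^(M+1-k) * (((M+1).choose k):ℝ))
      = (M+1)*pr := by
  rw [Finset.sum_range_succ']
  have key : ∀ i ∈ Finset.range (M+1), ((i+1:ℕ):ℝ) * (pr^(i+1) * (1-pr)^(M+1-(i+1)) * (((M+1).choose (i+1)):ℝ))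
      = ((M+1)*pr) * (pr^i * (1-pr)^(M-i) * ((M.choose i):ℝ)) := by
    intro i hi
    have h1 : M+1-(i+1) = M - i := by omega
    have h2 : ((M+1) * (M.choose i) : ℕ) = ((M+1).choose (i+1)) * (i+1) := Nat.add_one_mul_choose_eq M i
    have h2' : ((M:ℝ)+1) * (M.choose i : ℝ) = (((M+1).choose (i+1)):ℝ) * ((i:ℝ)+1) := by
      exact_mod_cast congrArg (Nat.cast (R := ℝ)) h2
    rw [h1]
    push_cast
    linear_combination (pr^(i+1) * (1-pr)^(M-i)) * h2'.symm
  rw [Finset.sum_congr rfl key]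
  rw [← Finset.mul_sum, binR_sum]
  simp

lemma binR_sum_mul2 (pr : ℝ) (M : ℕ) :
    ∑ k ∈ Finset.range (M+3), (k:ℝ) * ((k:ℝ)-1) * (pr^k * (1-pr)^(M+2-k) * (((M+2).choose k):ℝ))
      = (M+2)*(M+1)*pr^2 := by
  rw [Finset.sum_range_succ', Finset.sum_range_succ']
  have key : ∀ i ∈ Finset.range (M+1), ((i+1+1:ℕ):ℝ) * (((i+1+1:ℕ):ℝ)-1) * (pr^(i+1+1) * (1-pr)^(M+2-(i+1+1)) * (((M+2).choose (i+1+1)):ℝ))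
      = ((M+2)*(M+1)*pr^2) * (pr^i * (1-pr)^(M-i) * ((M.choose i):ℝ)) := by
    intro i hi
    have h1 : M+2-(i+1+1) = M - i := by omega
    have h2 : ((M+2) * ((M+1).choose (i+1)) : ℕ) = ((M+2).choose (i+2)) * (i+2) := Nat.add_one_mul_choose_eq (M+1) (i+1)
    have h3 : ((M+1) * (M.choose i) : ℕ) = ((M+1).choose (i+1)) * (i+1) := Nat.add_one_mul_choose_eq M i
    have h4 : ((M+2) * ((M+1) * (M.choose i)) : ℕ) = ((M+2).choose (i+2)) * (i+2) * (i+1) := by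
      rw [h3, ← mul_assoc, h2]
    have h4' : ((M:ℝ)+2) * (((M:ℝ)+1) * (M.choose i : ℝ)) = (((M+2).choose (i+2)):ℝ) * ((i:ℝ)+2) * ((i:ℝ)+1) := by
      exact_mod_cast congrArg (Nat.cast (R := ℝ)) h4
    rw [h1]
    push_cast
    linear_combination (pr^(i+2) * (1-pr)^(M-i)) * h4'.symm
  rw [Finset.sum_congr rfl key]
  rw [← Finset.mul_sum, binR_sum]
  push_cast
  ring

/-- The real pmf of `Binomial(m+2, pr)`. -/
noncomputable def fR (m : ℕ) (pr : ℝ) (k : ℕ) : ℝ :=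
  pr^k * (1-pr)^(m+2-k) * (((m+2).choose k):ℝ)

/-- The real pmf of the amplified distribution, with `n = m+1`. -/
noncomputable def gR (m : ℕ) (pr : ℝ) (k : ℕ) : ℝ :=
  pr^k * (1-pr)^(m+1-k) * (((m+1).choose k):ℝ) * (1 - (k:ℝ)/((m:ℝ)+1))
  + (if k = 0 then 0 else
      pr^(k-1) * (1-pr)^(m+1-(k-1)) * (((m+1).choose (k-1)):ℝ) * (((k-1:ℕ):ℝ)/((m:ℝ)+1)))

lemma sumM (pr : ℝ) (m : ℕ) :
    ∑ k ∈ Finset.range (m+3), (pr^k * (1-pr)^(m+2-k) * (((m+2).choose k):ℝ))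
      * ((((m:ℝ)+2)*pr - k)^2 + (((m:ℝ)+2)-k)*pr^2 + (k:ℝ)*(1-pr)^2)
      = 2*((m:ℝ)+2)*pr*(1-pr) := by
  have key : ∀ k ∈ Finset.range (m+3),
      (pr^k * (1-pr)^(m+2-k) * (((m+2).choose k):ℝ))
        * ((((m:ℝ)+2)*pr - k)^2 + (((m:ℝ)+2)-k)*pr^2 + (k:ℝ)*(1-pr)^2)
      = (k:ℝ) * ((k:ℝ)-1) * (pr^k * (1-pr)^(m+2-k) * (((m+2).choose k):ℝ))
        + (2*(1-pr) - 2*((m:ℝ)+2)*pr) * ((k:ℝ) * (pr^k * (1-pr)^(m+2-k) * (((m+2).choose k):ℝ)))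
        + (((m:ℝ)+2)^2*pr^2 + ((m:ℝ)+2)*pr^2) * (pr^k * (1-pr)^(m+2-k) * (((m+2).choose k):ℝ)) := by
    intro k hk; ring
  rw [Finset.sum_congr rfl key]
  rw [Finset.sum_add_distrib, Finset.sum_add_distrib, ← Finset.mul_sum, ← Finset.mul_sum]
  have e2 := binR_sum_mul2 pr m
  have e1 := binR_sum_mul pr (m+1)
  have e0 := binR_sum pr (m+2)
  push_cast at e1 e0 ⊢
  rw [e2]
  rw [show (m:ℝ)+1+1 = (m:ℝ)+2 by ring] at e1
  rw [e1, e0]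
  ring

lemma keyEq (m : ℕ) (pr : ℝ) (k : ℕ) (hk : k ≤ m + 2) :
    ((m:ℝ)+1)*((m:ℝ)+2)*pr*(1-pr)*(fR m pr k - gR m pr k)
      = -(fR m pr k) * ((((m:ℝ)+2)*pr - k)^2 - (((m:ℝ)+2)-k)*pr^2 - (k:ℝ)*(1-pr)^2) := by
  unfold fR gR
  rcases Nat.eq_zero_or_pos k with hk0 | hkpos
  · subst hk0
    simp only [pow_zero, Nat.sub_zero, Nat.choose_zero_right, Nat.cast_one, if_pos rfl,
      Nat.cast_zero, one_mul, add_zero, if_true]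
    rw [show m+2 = (m+1)+1 from rfl, pow_succ]
    ring
  rcases Nat.lt_or_ge k (m+2) with hklt | hkge
  · -- middle case : 1 ≤ k ≤ m+1 : k = j+1, j ≤ m
    obtain ⟨j, rfl⟩ : ∃ j, k = j + 1 := ⟨k - 1, by omega⟩
    obtain ⟨t, rfl⟩ : ∃ t, m = j + t := ⟨m - j, by omega⟩
    have e1 : j + t + 2 - (j + 1) = t + 1 := by omega
    have e2 : j + t + 1 - (j + 1) = t := by omega
    have e3 : j + t + 1 - (j + 1 - 1) = t + 1 := by omega
    have e4 : j + 1 - 1 = j := by omega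
    rw [e1, e2, e3, e4, if_neg (Nat.succ_ne_zero j)]
    have h2nat : (j+t+2) * ((j+t+1).choose j) = (j+t+2).choose (j+1) * (j+1) :=
      Nat.add_one_mul_choose_eq (j+t+1) j
    have h1nat : (j+t+2) * ((j+t+1).choose (j+1)) = (j+t+2).choose (j+1) * (t+1) := by
      have a1 : (j+t+2) * ((j+t+1).choose (j+1)) = (j+t+2).choose (j+2) * (j+2) :=
        Nat.add_one_mul_choose_eq (j+t+1) (j+1)
      have a2 : (j+t+2).choose (j+2) * (j+2) = (j+t+2).choose (j+1) * (t+1) := by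
        have := Nat.choose_succ_right_eq (j+t+2) (j+1)
        rw [show (j+t+2)-(j+1) = t+1 from by omega] at this
        simpa using this
      exact a1.trans a2
    have h1nat' := congrArg (Nat.cast (R := ℝ)) h1nat
    have h2nat' := congrArg (Nat.cast (R := ℝ)) h2nat
    push_cast at h1nat' h2nat'
    have hne : ((j:ℝ)+(t:ℝ)+2) ≠ 0 := by positivity
    have h1 : (((j+t+1).choose (j+1)):ℝ) = ((t:ℝ)+1) * (((j+t+2).choose (j+1)):ℝ) / ((j:ℝ)+(t:ℝ)+2) := by
      field_simp
      linarith [h1nat']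
    have h2 : (((j+t+1).choose j):ℝ) = ((j:ℝ)+1) * (((j+t+2).choose (j+1)):ℝ) / ((j:ℝ)+(t:ℝ)+2) := by
      field_simp
      linarith [h2nat']
    rw [h1, h2]
    have hne2 : ((j:ℝ)+(t:ℝ)+1) ≠ 0 := by positivity
    push_cast
    field_simp
    ring
  · -- k = m+2
    have hkeq : k = m + 2 := le_antisymm hk hkge
    subst hkeq
    have e1 : m + 2 - (m + 2) = 0 := by omega
    have e2 : m + 1 - (m + 2) = 0 := by omega
    have e3 : m + 2 - 1 = m + 1 := by omega
    have e4 : m + 1 - (m + 1) = 0 := by omega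
    rw [e1, e2, e3, e4, if_neg (by omega : ¬ m + 2 = 0)]
    rw [Nat.choose_eq_zero_of_lt (show m+1 < m+2 by omega), Nat.choose_self, Nat.choose_self]
    have hne2 : ((m:ℝ)+1) ≠ 0 := by positivity
    push_cast
    rw [show m+2 = (m+1)+1 from rfl, pow_succ]
    field_simp
    ring

lemma endpoint_zero (m : ℕ) (k : ℕ) : fR m 0 k = gR m 0 k := by
  rcases k with _ | j
  · simp [fR, gR]
  · rcases j with _ | i
    · simp [fR, gR]
    · simp [fR, gR]

lemma endpoint_one (m : ℕ) (k : ℕ) (hk : k ≤ m + 2) : fR m 1 k = gR m 1 k := by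
  have hne : ((m:ℝ)+1) ≠ 0 := by positivity
  rcases (by omega : k = m + 2 ∨ k = m + 1 ∨ k < m + 1) with h | h | h
  · subst h
    unfold fR gR
    rw [show m+2-(m+2) = 0 from by omega, show m+1-(m+2) = 0 from by omega,
      show m+2-1 = m+1 from by omega, show m+1-(m+1) = 0 from by omega,
      if_neg (by omega : ¬ m+2 = 0), Nat.choose_eq_zero_of_lt (show m+1 < m+2 by omega),
      Nat.choose_self, Nat.choose_self]
    push_cast
    field_simp
    ring
  · subst h
    unfold fR gR
    rw [show m+2-(m+1) = 1 from by omega, show m+1-(m+1) = 0 from by omega,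
      show m+1-1 = m from by omega, show m+1-m = 1 from by omega,
      if_neg (by omega : ¬ m+1 = 0), Nat.choose_self]
    push_cast
    field_simp
    ring
  · unfold fR gR
    rw [show (1:ℝ)-1 = 0 from by norm_num]
    rw [zero_pow (show m+2-k ≠ 0 by omega), zero_pow (show m+1-k ≠ 0 by omega)]
    rcases Nat.eq_zero_or_pos k with h0 | h0
    · subst h0; simp
    · rw [if_neg (by omega : ¬ k = 0), zero_pow (show m+1-(k-1) ≠ 0 by omega)]
      ring

lemma main_real (m : ℕ) (pr : ℝ) (h0 : 0 ≤ pr) (h1 : pr ≤ 1) :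
    ∑ k ∈ Finset.range (m+3), |fR m pr k - gR m pr k| ≤ 2/((m:ℝ)+1) := by
  have hpos : (0:ℝ) < (m:ℝ)+1 := by positivity
  rcases eq_or_lt_of_le h0 with h0' | h0'
  · have : ∀ k ∈ Finset.range (m+3), |fR m pr k - gR m pr k| = 0 := by
      intro k _; rw [← h0', endpoint_zero]; simp
    rw [Finset.sum_congr rfl this]
    simp
    positivity
  rcases eq_or_lt_of_le h1 with h1' | h1'
  · have : ∀ k ∈ Finset.range (m+3), |fR m pr k - gR m pr k| = 0 := by
      intro k hk; rw [h1', endpoint_one m k (by simpa [Nat.lt_succ_iff] using Finset.mem_range.mp hk)]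
      simp
    rw [Finset.sum_congr rfl this]
    simp
    positivity
  set D : ℝ := ((m:ℝ)+1)*((m:ℝ)+2)*pr*(1-pr) with hD
  have hDpos : 0 < D := by
    apply mul_pos (mul_pos (mul_pos (by positivity) (by positivity)) h0')
    linarith
  have hbound : ∀ k ∈ Finset.range (m+3),
      |fR m pr k - gR m pr k| ≤ (fR m pr k
        * ((((m:ℝ)+2)*pr - k)^2 + (((m:ℝ)+2)-k)*pr^2 + (k:ℝ)*(1-pr)^2)) / D := by
    intro k hk
    have hk' : k ≤ m + 2 := by simpa [Nat.lt_succ_iff] using Finset.mem_range.mp hk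
    have e := keyEq m pr k hk'
    have hfnn : 0 ≤ fR m pr k := by
      unfold fR
      exact mul_nonneg (mul_nonneg (pow_nonneg h0 _) (pow_nonneg (by linarith) _))
        (Nat.cast_nonneg _)
    have habs : |fR m pr k - gR m pr k| = |(-(fR m pr k)) * ((((m:ℝ)+2)*pr - k)^2 - (((m:ℝ)+2)-k)*pr^2 - (k:ℝ)*(1-pr)^2)| / D := by
      rw [← e, abs_mul, abs_of_pos hDpos, mul_div_cancel_left₀ _ (ne_of_gt hDpos)]
    rw [habs]
    gcongr
    rw [abs_mul, abs_neg, abs_of_nonneg hfnn]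
    apply mul_le_mul_of_nonneg_left ?_ hfnn
    have hb : (0:ℝ) ≤ (((m:ℝ)+2)-k)*pr^2 := by
      have : (k:ℝ) ≤ (m:ℝ)+2 := by exact_mod_cast hk'
      nlinarith [sq_nonneg pr]
    have hc : (0:ℝ) ≤ (k:ℝ)*(1-pr)^2 := by positivity
    have ha : (0:ℝ) ≤ (((m:ℝ)+2)*pr - k)^2 := sq_nonneg _
    rw [abs_le]
    constructor <;> nlinarith
  calc ∑ k ∈ Finset.range (m+3), |fR m pr k - gR m pr k|
      ≤ ∑ k ∈ Finset.range (m+3), (fR m pr k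
        * ((((m:ℝ)+2)*pr - k)^2 + (((m:ℝ)+2)-k)*pr^2 + (k:ℝ)*(1-pr)^2)) / D :=
        Finset.sum_le_sum hbound
    _ = (∑ k ∈ Finset.range (m+3), fR m pr k
        * ((((m:ℝ)+2)*pr - k)^2 + (((m:ℝ)+2)-k)*pr^2 + (k:ℝ)*(1-pr)^2)) / D := by
        rw [Finset.sum_div]
    _ = (2*((m:ℝ)+2)*pr*(1-pr)) / D := by rw [← sumM]; rfl
    _ = 2/((m:ℝ)+1) := by
        rw [hD]
        have h2 : ((m:ℝ)+2) ≠ 0 := by positivity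
        have h3 : pr ≠ 0 := ne_of_gt h0'
        have h4 : (1-pr) ≠ 0 := by intro h; rw [sub_eq_zero] at h; exact absurd h.symm (ne_of_lt h1')
        field_simp

/-! ### PMF computations -/

lemma sum_fin_ite {M : Type*} [AddCommMonoid M] (N k : ℕ) (c : Fin N → M) :
    ∑ i : Fin N, (if k = (i : ℕ) then c i else 0) = if h : k < N then c ⟨k, h⟩ else 0 := by
  split_ifs with h
  · refine Fintype.sum_eq_single (⟨k, h⟩ : Fin N) (fun b hb => ?_) |>.trans (by rw [if_pos rfl])
    rw [if_neg]
    intro he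
    exact hb (by ext; simp [← he])
  · apply Finset.sum_eq_zero
    intro i _
    rw [if_neg]
    intro he
    exact h (he ▸ i.isLt)

lemma hpN (p : ℝ≥0∞) (hp : p ≤ 1) : p.toNNReal ≤ 1 := by
  simpa using ENNReal.toNNReal_mono ENNReal.one_ne_top hp

lemma binomial_apply' (p : ℝ≥0∞) (hp : p ≤ 1) (N : ℕ) (i : Fin (N+1)) :
    PMF.binomial p.toNNReal (hpN p hp) N i = p^(i:ℕ) * (1-p)^(N-(i:ℕ)) * (N.choose i : ℕ) := by
  rw [PMF.binomial_apply, Fin.val_last,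
    ENNReal.coe_toNNReal (ne_top_of_le_ne_top ENNReal.one_ne_top hp)]

lemma binomNat_apply (p : ℝ≥0∞) (hp : p ≤ 1) (N k : ℕ) :
    (binomNat p hp N) k = if k < N+1 then p^k * (1-p)^(N-k) * (N.choose k : ℕ) else 0 := by
  rw [binomNat]
  have hid : (PMF.map (fun i => i) (do
        let a ← PMF.binomial p.toNNReal (hpN p hp) N
        pure ((a:ℕ)))) k = ((PMF.binomial p.toNNReal (hpN p hp) N).bind (fun a => PMF.pure (a:ℕ))) k := by
    rw [show (fun (i:ℕ) => i) = id from rfl, PMF.map_id]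
    rfl
  rw [hid, PMF.bind_apply, tsum_fintype]
  have e : ∀ i : Fin (N+1), (PMF.binomial p.toNNReal (hpN p hp) N i * (PMF.pure ((i:ℕ)) k))
      = (if k = (i:ℕ) then p^(i:ℕ) * (1-p)^(N-(i:ℕ)) * (N.choose (i:ℕ) : ℕ) else 0) := by
    intro i
    rw [PMF.pure_apply, mul_ite, mul_one, mul_zero]
    split_ifs with h
    · rw [binomial_apply' p hp N i]
    · rfl
  rw [Finset.sum_congr rfl (fun i _ => e i),
    sum_fin_ite (N+1) k (fun i => p^(i:ℕ) * (1-p)^(N-(i:ℕ)) * (N.choose (i:ℕ) : ℕ))]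
  split_ifs with h <;> rfl

lemma bpe_apply (p : ℝ≥0∞) (hp : p ≤ 1) (n k : ℕ) :
    (binomPlusEmpirical p hp n) k =
      (if k < n+1 then (p^k * (1-p)^(n-k) * (n.choose k : ℕ)) * (1 - (k:ℝ≥0∞)/(n:ℝ≥0∞)) else 0)
      + (if 1 ≤ k ∧ k < n+2 then
          (p^(k-1) * (1-p)^(n-(k-1)) * (n.choose (k-1) : ℕ)) * (((k-1:ℕ):ℝ≥0∞)/(n:ℝ≥0∞)) else 0) := by
  rw [binomPlusEmpirical, PMF.bind_apply, tsum_fintype]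
  have e : ∀ (h : Fin (n+1)) (hle : ((((h:ℕ)):ℝ≥0∞)/(n:ℝ≥0∞)).toNNReal ≤ 1),
      ((PMF.bernoulli ((((h:ℕ):ℝ≥0∞)/(n:ℝ≥0∞)).toNNReal) hle).map (fun b => (h:ℕ) + (if b then 1 else 0))) k
      = (if k = (h:ℕ) then (1 - ((h:ℕ):ℝ≥0∞)/(n:ℝ≥0∞)) else 0)
        + (if k = (h:ℕ)+1 then ((h:ℕ):ℝ≥0∞)/(n:ℝ≥0∞) else 0) := by
    intro h hle
    have h1 : ((h : ℕ) : ℝ≥0∞) / (n : ℝ≥0∞) ≤ 1 := ENNReal.div_le_of_le_mul (by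
      simpa using (Nat.cast_le (α := ℝ≥0∞)).mpr h.is_le)
    have hx : ((h : ℕ) : ℝ≥0∞) / (n : ℝ≥0∞) ≠ ⊤ := ne_top_of_le_ne_top ENNReal.one_ne_top h1
    rw [PMF.map_apply, tsum_bool]
    simp only [Bool.false_eq_true, if_false, if_true, add_zero, PMF.bernoulli_apply,
      Bool.cond_false, Bool.cond_true, ENNReal.coe_sub, ENNReal.coe_one, ENNReal.coe_toNNReal hx]
  have step : ∀ h : Fin (n+1), (PMF.binomial p.toNNReal (hpN p hp) n) h *
      ((PMF.bernoulli ((((h:ℕ):ℝ≥0∞)/(n:ℝ≥0∞))).toNNReal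
        (by
          have h1 : ((h : ℕ) : ℝ≥0∞) / (n : ℝ≥0∞) ≤ 1 := ENNReal.div_le_of_le_mul (by
            simpa using (Nat.cast_le (α := ℝ≥0∞)).mpr h.is_le)
          simpa using ENNReal.toNNReal_mono ENNReal.one_ne_top h1)).map
          (fun b => (h:ℕ) + (if b then 1 else 0))) k
      = (if k = (h:ℕ) then (PMF.binomial p.toNNReal (hpN p hp) n) h * (1 - ((h:ℕ):ℝ≥0∞)/(n:ℝ≥0∞)) else 0)
        + (if k = (h:ℕ)+1 then (PMF.binomial p.toNNReal (hpN p hp) n) h * (((h:ℕ):ℝ≥0∞)/(n:ℝ≥0∞)) else 0) := by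
    intro h
    rw [e h _, mul_add, mul_ite, mul_zero, mul_ite, mul_zero]
  rw [Finset.sum_congr rfl (fun h _ => step h), Finset.sum_add_distrib]
  congr 1
  · rw [sum_fin_ite (n+1) k (fun h => (PMF.binomial p.toNNReal (hpN p hp) n) h * (1 - ((h:ℕ):ℝ≥0∞)/(n:ℝ≥0∞)))]
    split_ifs with h
    · rw [binomial_apply' p hp]
    · rfl
  · rcases k with _ | j
    · rw [Finset.sum_eq_zero (fun i _ => by simp), if_neg (by omega)]
    · have e2 : ∀ h : Fin (n+1),
          (if j + 1 = (h:ℕ) + 1 then (PMF.binomial p.toNNReal (hpN p hp) n) h * (((h:ℕ):ℝ≥0∞)/(n:ℝ≥0∞)) else 0)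
          = (if j = (h:ℕ) then (PMF.binomial p.toNNReal (hpN p hp) n) h * (((h:ℕ):ℝ≥0∞)/(n:ℝ≥0∞)) else 0) := by
        intro h; simp
      rw [Finset.sum_congr rfl (fun h _ => e2 h),
        sum_fin_ite (n+1) j (fun h => (PMF.binomial p.toNNReal (hpN p hp) n) h * (((h:ℕ):ℝ≥0∞)/(n:ℝ≥0∞)))]
      by_cases hj : j < n+1
      · rw [dif_pos hj, if_pos (by omega)]
        rw [binomial_apply' p hp]
        simp
      · rw [dif_neg hj, if_neg (by omega)]

lemma tv_le (P Q : PMF ℕ) (s : Finset ℕ) (hP : ∀ k, k ∉ s → P k = 0) (hQ : ∀ k, k ∉ s → Q k = 0) :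
    tvDist P.toMeasure Q.toMeasure ≤ ∑ k ∈ s, |(P k).toReal - (Q k).toReal| := by
  have hne : Nonempty {A : Set ℕ // MeasurableSet A} := ⟨⟨∅, MeasurableSet.empty⟩⟩
  apply ciSup_le
  rintro ⟨A, hA⟩
  have key : ∀ (R : PMF ℕ), (∀ k, k ∉ s → R k = 0) →
      (R.toMeasure A).toReal = ∑ k ∈ s, (A.indicator R k).toReal := by
    intro R hR
    rw [PMF.toMeasure_apply R hA]
    rw [tsum_eq_sum (s := s) (f := fun k => A.indicator (⇑R) k) (fun k hk => by
      show A.indicator (⇑R) k = 0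
      by_cases hkA : k ∈ A
      · rw [Set.indicator_of_mem hkA, hR k hk]
      · rw [Set.indicator_of_notMem hkA])]
    apply ENNReal.toReal_sum
    intro a _
    by_cases hkA : a ∈ A
    · rw [Set.indicator_of_mem hkA]; exact PMF.apply_ne_top R a
    · rw [Set.indicator_of_notMem hkA]; exact ENNReal.zero_ne_top
  rw [key P hP, key Q hQ, ← Finset.sum_sub_distrib]
  refine (Finset.abs_sum_le_sum_abs _ _).trans (Finset.sum_le_sum fun k _ => ?_)
  by_cases hkA : k ∈ A
  · rw [Set.indicator_of_mem hkA, Set.indicator_of_mem hkA]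
  · rw [Set.indicator_of_notMem hkA, Set.indicator_of_notMem hkA]
    simp

lemma toReal_P (p : ℝ≥0∞) (hp : p ≤ 1) (m k : ℕ) (hk : k < m+3) :
    ((binomNat p hp (m+2)) k).toReal = fR m p.toReal k := by
  have hpt : p ≠ ⊤ := ne_top_of_le_ne_top ENNReal.one_ne_top hp
  rw [binomNat_apply, if_pos (show k < m+2+1 by omega), ENNReal.toReal_mul, ENNReal.toReal_mul,
    ENNReal.toReal_pow, ENNReal.toReal_pow, ENNReal.toReal_natCast,
    ENNReal.toReal_sub_of_le hp ENNReal.one_ne_top, ENNReal.toReal_one]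
  rfl

lemma toReal_Q (p : ℝ≥0∞) (hp : p ≤ 1) (m k : ℕ) (hk : k < m+3) :
    ((binomPlusEmpirical p hp (m+1)) k).toReal = gR m p.toReal k := by
  have hpt : p ≠ ⊤ := ne_top_of_le_ne_top ENNReal.one_ne_top hp
  have h1pt : (1-p) ≠ ⊤ := ENNReal.sub_ne_top ENNReal.one_ne_top
  have hBne : ∀ j : ℕ, (p^j * (1-p)^(m+1-j) * ((m+1).choose j : ℕ) : ℝ≥0∞) ≠ ⊤ :=
    fun j => ENNReal.mul_ne_top (ENNReal.mul_ne_top (ENNReal.pow_ne_top hpt)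
      (ENNReal.pow_ne_top h1pt)) (ENNReal.natCast_ne_top _)
  have hBtoReal : ∀ j : ℕ, ((p^j * (1-p)^(m+1-j) * ((m+1).choose j : ℕ) : ℝ≥0∞)).toReal
      = p.toReal^j * (1-p.toReal)^(m+1-j) * (((m+1).choose j):ℝ) := by
    intro j
    rw [ENNReal.toReal_mul, ENNReal.toReal_mul, ENNReal.toReal_pow, ENNReal.toReal_pow,
      ENNReal.toReal_natCast, ENNReal.toReal_sub_of_le hp ENNReal.one_ne_top, ENNReal.toReal_one]
  have hdivne : ∀ j : ℕ, ((j:ℝ≥0∞) / (((m+1:ℕ)):ℝ≥0∞)) ≠ ⊤ := by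
    intro j
    simp [ENNReal.div_eq_top]
  have hdivtoReal : ∀ j : ℕ, ((j:ℝ≥0∞) / (((m+1:ℕ)):ℝ≥0∞)).toReal = (j:ℝ)/((m:ℝ)+1) := by
    intro j
    rw [ENNReal.toReal_div, ENNReal.toReal_natCast, ENNReal.toReal_natCast]
    push_cast
    rfl
  rw [bpe_apply]
  have hXne : (if k < m+1+1 then (p^k * (1-p)^(m+1-k) * ((m+1).choose k : ℕ))
      * (1 - (k:ℝ≥0∞)/((m+1:ℕ):ℝ≥0∞)) else 0) ≠ ⊤ := by
    split_ifs with h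
    · exact ENNReal.mul_ne_top (hBne k) (ENNReal.sub_ne_top ENNReal.one_ne_top)
    · exact ENNReal.zero_ne_top
  have hYne : (if 1 ≤ k ∧ k < m+1+2 then (p^(k-1) * (1-p)^(m+1-(k-1)) * ((m+1).choose (k-1) : ℕ))
      * (((k-1:ℕ):ℝ≥0∞)/((m+1:ℕ):ℝ≥0∞)) else 0) ≠ ⊤ := by
    split_ifs with h
    · exact ENNReal.mul_ne_top (hBne (k-1)) (hdivne (k-1))
    · exact ENNReal.zero_ne_top
  rw [ENNReal.toReal_add hXne hYne]
  unfold gR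
  congr 1
  · by_cases hk2 : k < m+1+1
    · rw [if_pos hk2, ENNReal.toReal_mul, hBtoReal k]
      congr 1
      have hle : ((k:ℝ≥0∞) / (((m+1:ℕ)):ℝ≥0∞)) ≤ 1 := by
        refine ENNReal.div_le_of_le_mul ?_
        rw [one_mul]
        exact_mod_cast show k ≤ m+1 by omega
      rw [ENNReal.toReal_sub_of_le hle ENNReal.one_ne_top, ENNReal.toReal_one, hdivtoReal k]
    · rw [if_neg hk2]
      have hkeq : k = m+2 := by omega
      subst hkeq
      rw [Nat.choose_eq_zero_of_lt (show m+1 < m+2 by omega)]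
      simp
  · rcases k with _ | j
    · rw [if_neg (by omega), if_pos rfl]
      simp
    · rw [if_pos ⟨by omega, by omega⟩, if_neg (Nat.succ_ne_zero j)]
      rw [ENNReal.toReal_mul, hBtoReal, hdivtoReal]

lemma P_vanish (p : ℝ≥0∞) (hp : p ≤ 1) (m k : ℕ) (hk : k ∉ Finset.range (m+3)) :
    (binomNat p hp (m+2)) k = 0 := by
  rw [binomNat_apply, if_neg]
  simp only [Finset.mem_range] at hk
  omega

lemma Q_vanish (p : ℝ≥0∞) (hp : p ≤ 1) (m k : ℕ) (hk : k ∉ Finset.range (m+3)) :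
    (binomPlusEmpirical p hp (m+1)) k = 0 := by
  simp only [Finset.mem_range] at hk
  rw [bpe_apply, if_neg (by omega), if_neg (by omega)]
  simp

/-- Appending one draw from the empirical distribution of `n` i.i.d. `Bernoulli(p)` samples
yields a count distribution within total variation distance `O(1/n)` of `Binomial(n+1, p)`. -/
theorem binomial_empirical_amplification :
    ∃ C : ℝ, 0 < C ∧ ∀ n : ℕ, 1 ≤ n → ∀ (p : ℝ≥0∞) (hp : p ≤ 1),
      tvDist (binomNat p hp (n + 1)).toMeasure (binomPlusEmpirical p hp n).toMeasure
        ≤ C / n := by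
  refine ⟨2, by norm_num, ?_⟩
  intro n hn p hp
  obtain ⟨m, rfl⟩ : ∃ m, n = m + 1 := ⟨n - 1, by omega⟩
  have h0 : 0 ≤ p.toReal := ENNReal.toReal_nonneg
  have h1 : p.toReal ≤ 1 := by
    simpa using ENNReal.toReal_mono ENNReal.one_ne_top hp
  have step1 : tvDist (binomNat p hp (m + 1 + 1)).toMeasure
      (binomPlusEmpirical p hp (m + 1)).toMeasure
      ≤ ∑ k ∈ Finset.range (m+3),
          |((binomNat p hp (m+2)) k).toReal - ((binomPlusEmpirical p hp (m+1)) k).toReal| :=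
    tv_le _ _ _ (P_vanish p hp m) (Q_vanish p hp m)
  refine step1.trans ?_
  have step2 : ∑ k ∈ Finset.range (m+3),
      |((binomNat p hp (m+2)) k).toReal - ((binomPlusEmpirical p hp (m+1)) k).toReal|
      = ∑ k ∈ Finset.range (m+3), |fR m p.toReal k - gR m p.toReal k| := by
    refine Finset.sum_congr rfl fun k hk => ?_
    have hk' : k < m + 3 := Finset.mem_range.mp hk
    rw [toReal_P p hp m k hk', toReal_Q p hp m k hk']
  rw [step2]
  refine (main_real m p.toReal h0 h1).trans ?_
  push_cast
  norm_num
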